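/- Let x ∈ E, let α ∈ [0, 1], and let z ∈ E satisfy ∇²f(x) z = −α ∇f(x). Then ‖∇f(x + z)‖ ≤ (1 − α)·‖∇f(x)‖ + (L·α²/(2μ²))·‖∇f(x)‖². -/

import Mathlib

open InnerProductSpace intervalIntegral

set_option maxHeartbeats 1000000
set_option synthInstance.maxHeartbeats 400000

theorem adaptive_newton_one_step (p : ℕ) (hp : 1 ≤ p)
    (f : EuclideanSpace ℝ (Fin p) → ℝ) (hf : ContDiff ℝ 2 f)
    (μ L : ℝ) (hμ : 0 < μ) (hL : 0 < L)
    (hstrong : ∀ x v : EuclideanSpace ℝ (Fin p),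
      μ * ‖v‖ ^ 2 ≤ inner ℝ (fderiv ℝ (gradient f) x v) v)
    (hlip : ∀ x y : EuclideanSpace ℝ (Fin p),
      ‖fderiv ℝ (gradient f) x - fderiv ℝ (gradient f) y‖ ≤ L * ‖x - y‖)
    (x z : EuclideanSpace ℝ (Fin p)) (α : ℝ) (hα0 : 0 ≤ α) (hα1 : α ≤ 1)
    (hz : fderiv ℝ (gradient f) x z = -α • gradient f x) :
    ‖gradient f (x + z)‖ ≤
      (1 - α) * ‖gradient f x‖ + L * α ^ 2 / (2 * μ ^ 2) * ‖gradient f x‖ ^ 2 := by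
  set g := gradient f with hg
  set H := fderiv ℝ g with hH
  -- g is C¹
  have hgC1 : ContDiff ℝ 1 g := by
    have h1 : ContDiff ℝ 1 (fderiv ℝ f) := hf.fderiv_right (by norm_num)
    exact (toDual ℝ (EuclideanSpace ℝ (Fin p))).symm.contDiff.comp h1
  have hgdiff : ∀ y, HasFDerivAt g (H y) y := fun y =>
    (hgC1.differentiable one_ne_zero y).hasFDerivAt
  have hHcont : Continuous H := hgC1.continuous_fderiv one_ne_zero
  -- norm of z bound
  have hzn : μ * ‖z‖ ≤ α * ‖g x‖ := by
    rcases eq_or_ne z 0 with rfl | hz0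
    · simpa using mul_nonneg hα0 (norm_nonneg _)
    · have h1 := hstrong x z
      rw [hz] at h1
      have h2 : (inner ℝ ((-α • g x : EuclideanSpace ℝ (Fin p))) z : ℝ)
          ≤ α * ‖g x‖ * ‖z‖ := by
        rw [inner_smul_left]
        have := abs_real_inner_le_norm (g x) z
        have hb : (inner ℝ (g x) z : ℝ) ≥ -(‖g x‖ * ‖z‖) := by
          cases abs_le.1 this; linarith
        simp only [RCLike.star_def, starRingEnd_apply, star_trivial, neg_mul]
        nlinarith
      have hzpos : 0 < ‖z‖ := norm_pos_iff.2 hz0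
      nlinarith [h1, h2]
  -- path
  set ψ : ℝ → EuclideanSpace ℝ (Fin p) := fun t => g (x + t • z) - t • (H x z) with hψ
  have hψ' : ∀ t, HasDerivAt ψ (H (x + t • z) z - H x z) t := by
    intro t
    have hc : HasDerivAt (fun t : ℝ => x + t • z) z t := by
      simpa using ((hasDerivAt_id t).smul_const z).const_add x
    have h1 : HasDerivAt (fun t : ℝ => g (x + t • z)) (H (x + t • z) z) t :=
      (hgdiff (x + t • z)).comp_hasDerivAt (f := fun t : ℝ => x + t • z) t hc
    have h2 : HasDerivAt (fun t : ℝ => t • (H x z)) (H x z) t := by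
      simpa using (hasDerivAt_id t).smul_const (H x z)
    exact h1.sub h2
  have hcont : Continuous fun t : ℝ => H (x + t • z) z - H x z := by
    have hc : Continuous fun t : ℝ => x + t • z :=
      continuous_const.add (continuous_id.smul continuous_const)
    exact (((ContinuousLinearMap.apply ℝ (EuclideanSpace ℝ (Fin p)) z).continuous.comp
      (hHcont.comp hc)).sub continuous_const)
  have hftc : ψ 1 - ψ 0 = ∫ t in (0:ℝ)..1, (H (x + t • z) z - H x z) :=
    (integral_eq_sub_of_hasDerivAt (fun t _ => hψ' t)
      (hcont.intervalIntegrable 0 1)).symm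
  have hbound : ‖ψ 1 - ψ 0‖ ≤ L * ‖z‖ ^ 2 / 2 := by
    rw [hftc]
    have h1 : ∀ t ∈ Set.Icc (0:ℝ) 1, ‖H (x + t • z) z - H x z‖ ≤ L * ‖z‖ ^ 2 * t := by
      intro t ht
      have h2 : ‖H (x + t • z) z - H x z‖ ≤ ‖H (x + t • z) - H x‖ * ‖z‖ := by
        have := (H (x + t • z) - H x).le_opNorm z
        simpa using this
      have h3 : ‖H (x + t • z) - H x‖ ≤ L * (t * ‖z‖) := by
        have := hlip (x + t • z) x
        simpa [norm_smul, abs_of_nonneg ht.1] using this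
      calc ‖H (x + t • z) z - H x z‖ ≤ L * (t * ‖z‖) * ‖z‖ :=
            h2.trans (by nlinarith [norm_nonneg z])
        _ = L * ‖z‖ ^ 2 * t := by ring
    have hInt : IntervalIntegrable (fun t => L * ‖z‖ ^ 2 * t)
        MeasureTheory.volume 0 1 :=
      (continuous_const.mul continuous_id).intervalIntegrable 0 1
    have hval : (∫ t in (0:ℝ)..1, L * ‖z‖ ^ 2 * t) = L * ‖z‖ ^ 2 / 2 := by
      rw [intervalIntegral.integral_const_mul, integral_id]; ring
    calc ‖∫ t in (0:ℝ)..1, (H (x + t • z) z - H x z)‖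
        ≤ |∫ t in (0:ℝ)..1, L * ‖z‖ ^ 2 * t| :=
          norm_integral_le_abs_of_norm_le
            (by
              apply MeasureTheory.ae_restrict_of_forall_mem measurableSet_uIoc
              intro t ht
              rw [Set.uIoc_of_le (zero_le_one (α := ℝ))] at ht
              exact h1 t ⟨le_of_lt ht.1, ht.2⟩)
            hInt
      _ = L * ‖z‖ ^ 2 / 2 := by
          rw [hval, abs_of_nonneg (by positivity)]
  -- conclude
  have hψ1 : ψ 1 - ψ 0 = g (x + z) - ((1 - α) • g x) := by
    simp only [hψ, one_smul, zero_smul, sub_zero, add_zero, hz]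
    module
  have hkey : ‖g (x + z)‖ ≤ (1 - α) * ‖g x‖ + L * ‖z‖ ^ 2 / 2 := by
    have hns := norm_sub_norm_le (g (x + z)) ((1 - α) • g x)
    rw [← hψ1] at hns
    have hn : ‖(1 - α) • g x‖ = (1 - α) * ‖g x‖ := by
      rw [norm_smul, Real.norm_eq_abs, abs_of_nonneg (by linarith)]
    linarith [hbound]
  have hz2 : L * ‖z‖ ^ 2 / 2 ≤ L * α ^ 2 / (2 * μ ^ 2) * ‖g x‖ ^ 2 := by
    have h : μ ^ 2 * ‖z‖ ^ 2 ≤ α ^ 2 * ‖g x‖ ^ 2 := by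
      nlinarith [mul_le_mul hzn hzn (mul_nonneg hμ.le (norm_nonneg z)) (mul_nonneg hα0 (norm_nonneg (g x)))]
    rw [div_mul_eq_mul_div, div_le_div_iff₀ (by norm_num) (by positivity)]
    nlinarith
  linarith
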